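/- Pointwise bound for the recursively defined valuation functions (Lemma 4.2): with ψ_t^n defined by ψ_T^n(z_{≤T}) = Σ_{s=1}^T x_s and ψ_t^n(z_{≤t}) = λ_t ∫ F^{-1}_{ψ^n_{t+1}(Z^n_{≤t+1}) | Z^n_{≤t}=z_{≤t}}(p) μ_t^1(dp) + (1-λ_t) ∫ F^{-1}_{-ψ^n_{t+1}(Z^n_{≤t+1}) | Z^n_{≤t}=z_{≤t}}(p) μ_t^2(dp), λ_t ∈ [0,1], μ_t^1, μ_t^2 ∈ P([0,1])', there exists a constant c ∈ (0,∞) such that |ψ_t^n(z)| ≤ c · E[|ψ^n_{t+1}(Z^n_{≤t+1})| | Z^n_{≤t} = z] for all z in the support of L(Z^n_{≤t}). -/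

import Mathlib

open MeasureTheory Set ProbabilityTheory

/-- The (left-continuous) quantile function of a distribution `ν` on `ℝ`. -/
noncomputable def qf (ν : MeasureTheory.Measure ℝ) (p : ℝ) : ℝ :=
  sInf {x : ℝ | p ≤ (ν (Iic x)).toReal}

/-- The class `P([0,1])'` of probability measures on `[0,1]` that either have a
bounded Lebesgue density or are supported in some `[a,b] ⊂ (0,1)`. -/
def MemPP (μ : MeasureTheory.Measure ℝ) : Prop :=
  MeasureTheory.IsProbabilityMeasure μ ∧ μ (Icc (0:ℝ) 1)ᶜ = 0 ∧
    ((∃ (c' : ℝ) (w : ℝ → ℝ), (∀ p, 0 ≤ w p ∧ w p ≤ c') ∧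
        μ = MeasureTheory.volume.withDensity fun p => ENNReal.ofReal (w p)) ∨
      ∃ a b : ℝ, 0 < a ∧ a < b ∧ b < 1 ∧ μ (Icc a b)ᶜ = 0)

open Filter Topology
open scoped ENNReal

namespace QFAux

variable {ν : Measure ℝ} [IsProbabilityMeasure ν]

lemma qf_eq (p : ℝ) : qf ν p = sInf {x : ℝ | p ≤ cdf ν x} := by
  unfold qf; congr 1; ext x; simp only [mem_setOf_eq, cdf_eq_real, measureReal_def]

lemma I_nonneg : 0 ≤ ∫ w, |w| ∂ν := integral_nonneg fun w => abs_nonneg w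

lemma markov (hint : Integrable (fun w : ℝ => w) ν) {x : ℝ} (hx : 0 < x) :
    ENNReal.ofReal x * ν {w | x ≤ |w|} ≤ ENNReal.ofReal (∫ w, |w| ∂ν) := by
  have h1 : ENNReal.ofReal (∫ w, |w| ∂ν) = ∫⁻ w, ENNReal.ofReal |w| ∂ν :=
    ofReal_integral_eq_lintegral_ofReal hint.abs (ae_of_all _ fun w => abs_nonneg w)
  rw [h1]
  have h2 := mul_meas_ge_le_lintegral₀ (μ := ν)
    (f := fun w => ENNReal.ofReal |w|) (measurable_abs.ennreal_ofReal.aemeasurable)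
    (ENNReal.ofReal x)
  have hseteq : {w : ℝ | x ≤ |w|} = {w : ℝ | ENNReal.ofReal x ≤ ENNReal.ofReal |w|} := by
    ext w
    simp only [mem_setOf_eq, ENNReal.ofReal_le_ofReal_iff (abs_nonneg w)]
  rw [hseteq]
  exact h2

lemma lower_mem (hint : Integrable (fun w : ℝ => w) ν) {p y : ℝ} (hp : 0 < p)
    (hy : p ≤ cdf ν y) : -((∫ w, |w| ∂ν) / p) ≤ y := by
  set I := ∫ w, |w| ∂ν with hI
  by_contra hcon
  push_neg at hcon
  have hy0 : y < 0 := lt_of_lt_of_le hcon (neg_nonpos.mpr (div_nonneg I_nonneg hp.le))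
  have hsub : Iic y ⊆ {w : ℝ | -y ≤ |w|} := by
    intro w hw
    simp only [mem_Iic] at hw
    simp only [mem_setOf_eq]
    exact le_trans (by linarith) (neg_le_abs w)
  have hmk := markov hint (neg_pos.mpr hy0)
  rw [cdf_eq_real, measureReal_def] at hy
  have h2 : ENNReal.ofReal p ≤ ν (Iic y) := ENNReal.ofReal_le_of_le_toReal hy
  have h3 : ENNReal.ofReal (-y * p) ≤ ENNReal.ofReal I := by
    rw [ENNReal.ofReal_mul (by linarith : (0:ℝ) ≤ -y)]
    calc ENNReal.ofReal (-y) * ENNReal.ofReal p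
        ≤ ENNReal.ofReal (-y) * ν (Iic y) := by gcongr
      _ ≤ ENNReal.ofReal (-y) * ν {w : ℝ | -y ≤ |w|} :=
        mul_le_mul_right (measure_mono hsub) _
      _ ≤ ENNReal.ofReal I := hmk
  have h4 : -y * p ≤ I := (ENNReal.ofReal_le_ofReal_iff I_nonneg).mp h3
  have h5 : I / p < -y := by linarith
  rw [div_lt_iff₀ hp] at h5
  linarith

lemma bddBelow_S (hint : Integrable (fun w : ℝ => w) ν) {p : ℝ} (hp : 0 < p) :
    BddBelow {x : ℝ | p ≤ cdf ν x} :=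
  ⟨-((∫ w, |w| ∂ν) / p), fun _ hy => lower_mem hint hp hy⟩

lemma nonempty_S {p : ℝ} (hp : p < 1) : {x : ℝ | p ≤ cdf ν x}.Nonempty := by
  obtain ⟨x, hx⟩ := ((tendsto_cdf_atTop ν).eventually (eventually_gt_nhds hp)).exists
  exact ⟨x, hx.le⟩

lemma qf_le_iff (hint : Integrable (fun w : ℝ => w) ν) {p : ℝ} (hp : p ∈ Ioo (0:ℝ) 1)
    (t : ℝ) : qf ν p ≤ t ↔ p ≤ cdf ν t := by
  rw [qf_eq]
  constructor
  · intro h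
    have key : ∀ x, t < x → p ≤ cdf ν x := by
      intro x hx
      obtain ⟨y, hy, hyx⟩ := (csInf_lt_iff (bddBelow_S hint hp.1) (nonempty_S hp.2)).mp
        (lt_of_le_of_lt h hx)
      exact hy.trans (monotone_cdf ν hyx.le)
    have tends : Tendsto (cdf ν) (𝓝[>] t) (𝓝 (cdf ν t)) :=
      ((cdf ν).right_continuous t).tendsto.mono_left (nhdsWithin_mono _ Ioi_subset_Ici_self)
    exact ge_of_tendsto tends (eventually_nhdsWithin_of_forall fun x hx => key x hx)
  · intro h
    exact csInf_le (bddBelow_S hint hp.1) h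

lemma qf_monoOn (hint : Integrable (fun w : ℝ => w) ν) :
    MonotoneOn (qf ν) (Ioo (0:ℝ) 1) := fun p hp q hq hpq =>
  (qf_le_iff hint hp _).mpr (hpq.trans ((qf_le_iff hint hq _).mp le_rfl))

lemma qf_lower (hint : Integrable (fun w : ℝ => w) ν) {p : ℝ} (hp : 0 < p) :
    -((∫ w, |w| ∂ν) / p) ≤ qf ν p := by
  rw [qf_eq]
  rcases eq_empty_or_nonempty {x : ℝ | p ≤ cdf ν x} with h | h
  · rw [h, Real.sInf_empty]
    exact neg_nonpos.mpr (div_nonneg I_nonneg hp.le)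
  · exact le_csInf h fun y hy => lower_mem hint hp hy

lemma qf_upper (hint : Integrable (fun w : ℝ => w) ν) {p : ℝ} (hp0 : 0 < p) (hp1 : p < 1) :
    qf ν p ≤ (∫ w, |w| ∂ν) / (1 - p) := by
  set I := ∫ w, |w| ∂ν with hIdef
  have hI : 0 ≤ I := I_nonneg
  refine le_of_forall_gt_imp_ge_of_dense fun x hx => ?_
  have hx0 : 0 < x := lt_of_le_of_lt (div_nonneg hI (by linarith)) hx
  rw [qf_eq]
  refine csInf_le (bddBelow_S hint hp0) ?_
  show p ≤ cdf ν x
  have hmk : ENNReal.ofReal x * ν (Ioi x) ≤ ENNReal.ofReal I := by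
    refine le_trans ?_ (markov hint hx0)
    exact mul_le_mul_right
      (measure_mono fun w hw => le_trans (le_of_lt hw) (le_abs_self w)) _
  have htr : x * (ν (Ioi x)).toReal ≤ I := by
    have := ENNReal.toReal_mono ENNReal.ofReal_ne_top hmk
    rwa [ENNReal.toReal_mul, ENNReal.toReal_ofReal hx0.le,
      ENNReal.toReal_ofReal hI] at this
  have hioi : (ν (Ioi x)).toReal ≤ I / x := (le_div_iff₀ hx0).mpr (by linarith)
  have hcompl : ν (Ioi x) = 1 - ν (Iic x) := by
    have h := measure_compl (measurableSet_Iic (a := x)) (measure_ne_top ν _)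
    rwa [compl_Iic, measure_univ] at h
  have hcdf : cdf ν x = 1 - (ν (Ioi x)).toReal := by
    rw [cdf_eq_real, measureReal_def, hcompl, ENNReal.toReal_sub_of_le prob_le_one ENNReal.one_ne_top,
      ENNReal.toReal_one]
    ring
  have hIx : I / x < 1 - p := by
    rw [div_lt_iff₀ hx0]
    have := (div_lt_iff₀ (by linarith : (0:ℝ) < 1 - p)).mp hx
    linarith
  rw [hcdf]
  linarith

lemma vol_inter_Iic {c : ℝ} (hc0 : 0 ≤ c) (hc1 : c ≤ 1) :
    volume (Ioo (0:ℝ) 1 ∩ Iic c) = ENNReal.ofReal c := by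
  apply le_antisymm
  · have h1 : Ioo (0:ℝ) 1 ∩ Iic c ⊆ Ioc 0 c := by
      intro p hp
      simp only [mem_inter_iff, mem_Ioo, mem_Iic, mem_Ioc] at *
      exact ⟨hp.1.1, hp.2⟩
    have := measure_mono (μ := (volume : Measure ℝ)) h1
    rwa [Real.volume_Ioc, sub_zero] at this
  · have h1 : Ioo (0:ℝ) c ⊆ Ioo (0:ℝ) 1 ∩ Iic c := by
      intro p hp
      simp only [mem_inter_iff, mem_Ioo, mem_Iic] at *
      exact ⟨⟨hp.1, lt_of_lt_of_le hp.2 hc1⟩, hp.2.le⟩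
    have := measure_mono (μ := (volume : Measure ℝ)) h1
    rwa [Real.volume_Ioo, sub_zero] at this

lemma vol_qf_lt (hint : Integrable (fun w : ℝ => w) ν) (s : ℝ) :
    volume {p ∈ Ioo (0:ℝ) 1 | qf ν p < s} = ν (Iio s) := by
  have hmono : Monotone fun n : ℕ => Ioo (0:ℝ) 1 ∩ Iic (cdf ν (s - 1 / (n + 1))) := by
    intro n m hnm
    refine inter_subset_inter_right _ (Iic_subset_Iic.mpr (monotone_cdf ν ?_))
    have h1 : (1:ℝ) / (m + 1) ≤ 1 / (n + 1) := by
      apply one_div_le_one_div_of_le (by positivity)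
      have : (n:ℝ) ≤ m := Nat.cast_le.mpr hnm
      linarith
    linarith
  have hset : {p ∈ Ioo (0:ℝ) 1 | qf ν p < s}
      = ⋃ n : ℕ, (Ioo (0:ℝ) 1 ∩ Iic (cdf ν (s - 1 / (n + 1)))) := by
    ext p
    simp only [mem_setOf_eq, mem_iUnion, mem_inter_iff, mem_Iic]
    constructor
    · rintro ⟨hp, hlt⟩
      obtain ⟨n, hn⟩ := exists_nat_one_div_lt (sub_pos.mpr hlt)
      exact ⟨n, hp, (qf_le_iff hint hp _).mp (by linarith)⟩
    · rintro ⟨n, hp, hle⟩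
      refine ⟨hp, lt_of_le_of_lt ((qf_le_iff hint hp _).mpr hle) ?_⟩
      have : (0:ℝ) < 1 / (n + 1) := by positivity
      linarith
  rw [hset, hmono.directed_le.measure_iUnion]
  have heq : ∀ n : ℕ, volume (Ioo (0:ℝ) 1 ∩ Iic (cdf ν (s - 1 / (n + 1))))
      = ν (Iic (s - 1 / (n + 1))) := fun n => by
    rw [vol_inter_Iic (cdf_nonneg _ _) (cdf_le_one _ _), ofReal_cdf]
  simp_rw [heq]
  have hmono2 : Monotone fun n : ℕ => Iic (s - 1 / ((n:ℝ) + 1)) := by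
    intro n m hnm
    refine Iic_subset_Iic.mpr ?_
    have h1 : (1:ℝ) / (m + 1) ≤ 1 / (n + 1) := by
      apply one_div_le_one_div_of_le (by positivity)
      have : (n:ℝ) ≤ m := Nat.cast_le.mpr hnm
      linarith
    linarith
  rw [← hmono2.directed_le.measure_iUnion]
  congr 1
  ext x
  simp only [mem_iUnion, mem_Iic, mem_Iio]
  constructor
  · rintro ⟨n, hn⟩
    have : (0:ℝ) < 1 / (n + 1) := by positivity
    linarith
  · intro hx
    obtain ⟨n, hn⟩ := exists_nat_one_div_lt (sub_pos.mpr hx)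
    exact ⟨n, by linarith⟩

lemma set_qf_gt (hint : Integrable (fun w : ℝ => w) ν) (t : ℝ) :
    {p ∈ Ioo (0:ℝ) 1 | t < qf ν p} = Ioo (cdf ν t) 1 := by
  ext p
  simp only [mem_setOf_eq, mem_Ioo]
  constructor
  · rintro ⟨hp, hlt⟩
    refine ⟨?_, hp.2⟩
    by_contra hc
    push_neg at hc
    exact absurd ((qf_le_iff hint hp t).mpr hc) (not_le.mpr hlt)
  · rintro ⟨h1, h2⟩
    have hp0 : 0 < p := lt_of_le_of_lt (cdf_nonneg ν t) h1
    refine ⟨⟨hp0, h2⟩, ?_⟩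
    by_contra hc
    push_neg at hc
    exact absurd ((qf_le_iff hint ⟨hp0, h2⟩ t).mp hc) (not_le.mpr h1)

lemma meas_Ioi (t : ℝ) : ν (Ioi t) = ENNReal.ofReal (1 - cdf ν t) := by
  have h := measure_compl (measurableSet_Iic (a := t)) (measure_ne_top ν _)
  rw [compl_Iic, measure_univ] at h
  rw [h, ← ofReal_cdf ν t, ← ENNReal.ofReal_one, ← ENNReal.ofReal_sub _ (cdf_nonneg ν t)]

lemma lintegral_qf (hint : Integrable (fun w : ℝ => w) ν) :
    ∫⁻ p in Ioo (0:ℝ) 1, ENNReal.ofReal |qf ν p| = ENNReal.ofReal (∫ w, |w| ∂ν) := by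
  have hmeas : AEMeasurable (fun p => |qf ν p|) (volume.restrict (Ioo (0:ℝ) 1)) :=
    measurable_abs.comp_aemeasurable
      (aemeasurable_restrict_of_monotoneOn measurableSet_Ioo (qf_monoOn hint))
  rw [lintegral_eq_lintegral_meas_lt _ (ae_of_all _ fun p => abs_nonneg _) hmeas]
  have hν : ENNReal.ofReal (∫ w, |w| ∂ν) = ∫⁻ w, ENNReal.ofReal |w| ∂ν :=
    ofReal_integral_eq_lintegral_ofReal hint.abs (ae_of_all _ fun w => abs_nonneg w)
  rw [hν, lintegral_eq_lintegral_meas_lt ν (ae_of_all _ fun w => abs_nonneg w)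
    (measurable_abs.aemeasurable)]
  refine setLIntegral_congr_fun_ae measurableSet_Ioi (ae_of_all _ fun t ht => ?_)
  rw [Measure.restrict_apply' measurableSet_Ioo]
  have ht0 : (0:ℝ) < t := ht
  have hsplit : {p | t < |qf ν p|} ∩ Ioo (0:ℝ) 1
      = {p ∈ Ioo (0:ℝ) 1 | qf ν p < -t} ∪ {p ∈ Ioo (0:ℝ) 1 | t < qf ν p} := by
    ext p
    simp only [mem_inter_iff, mem_setOf_eq, mem_union, lt_abs]
    constructor
    · rintro ⟨h1 | h1, h2⟩
      · exact Or.inr ⟨h2, h1⟩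
      · exact Or.inl ⟨h2, by linarith⟩
    · rintro (⟨h1, h2⟩ | ⟨h1, h2⟩)
      · exact ⟨Or.inr (by linarith), h1⟩
      · exact ⟨Or.inl h2, h1⟩
  have hdisj : Disjoint {p ∈ Ioo (0:ℝ) 1 | qf ν p < -t} {p ∈ Ioo (0:ℝ) 1 | t < qf ν p} := by
    rw [Set.disjoint_left]
    rintro p ⟨_, h1⟩ ⟨_, h2⟩
    linarith
  rw [set_qf_gt hint] at hdisj
  rw [hsplit, set_qf_gt hint, measure_union hdisj measurableSet_Ioo, vol_qf_lt hint,
    Real.volume_Ioo]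
  have hrhs : {w : ℝ | t < |w|} = Iio (-t) ∪ Ioi t := by
    ext w
    simp only [mem_setOf_eq, mem_union, mem_Iio, mem_Ioi, lt_abs]
    constructor
    · rintro (h | h)
      · exact Or.inr h
      · exact Or.inl (by linarith)
    · rintro (h | h)
      · exact Or.inr (by linarith)
      · exact Or.inl h
  have hdisj2 : Disjoint (Iio (-t)) (Ioi t) := by
    rw [Set.disjoint_left]
    intro w h1 h2
    simp only [mem_Iio, mem_Ioi] at h1 h2
    linarith
  rw [hrhs, measure_union hdisj2 measurableSet_Ioi, meas_Ioi]

end QFAux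
namespace QFAux

lemma key1 {μ : Measure ℝ} (hprob : IsProbabilityMeasure μ) {a b : ℝ}
    (ha : 0 < a) (hab : a < b) (hb : b < 1) (hsupp : μ (Icc a b)ᶜ = 0)
    (ν : Measure ℝ) [IsProbabilityMeasure ν] (hint : Integrable (fun w : ℝ => w) ν) :
    |∫ p, qf ν p ∂μ| ≤ (1 / a + 1 / (1 - b)) * ∫ w, |w| ∂ν := by
  set I := ∫ w, |w| ∂ν with hIdef
  have hI : 0 ≤ I := I_nonneg
  have hae : ∀ᵐ p ∂μ, p ∈ Icc a b := by
    rw [ae_iff]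
    exact hsupp
  have hbound : ∀ᵐ p ∂μ, ‖qf ν p‖ ≤ (1 / a + 1 / (1 - b)) * I := by
    refine hae.mono fun p hp => ?_
    obtain ⟨hpa, hpb⟩ := hp
    have hp0 : 0 < p := lt_of_lt_of_le ha hpa
    have hp1 : p < 1 := lt_of_le_of_lt hpb hb
    have h1 : I / p ≤ I / a := div_le_div_of_nonneg_left hI ha hpa
    have h2 : -(I / p) ≤ qf ν p := qf_lower hint hp0
    have h3 : qf ν p ≤ I / (1 - p) := qf_upper hint hp0 hp1
    have h4 : I / (1 - p) ≤ I / (1 - b) :=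
      div_le_div_of_nonneg_left hI (by linarith) (by linarith)
    have h5 : (0:ℝ) ≤ I / a := div_nonneg hI ha.le
    have h6 : (0:ℝ) ≤ I / (1 - b) := div_nonneg hI (by linarith)
    rw [Real.norm_eq_abs, abs_le]
    have he : (1 / a + 1 / (1 - b)) * I = I / a + I / (1 - b) := by
      rw [add_mul, one_div_mul_eq_div, one_div_mul_eq_div]
    constructor
    · rw [he]; linarith
    · rw [he]; linarith
  have := norm_integral_le_of_norm_le_const hbound
  rwa [measureReal_def, measure_univ, ENNReal.toReal_one, mul_one, Real.norm_eq_abs] at this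

lemma key2 {μ : Measure ℝ} {c' : ℝ} {w' : ℝ → ℝ} (hw : ∀ p, 0 ≤ w' p ∧ w' p ≤ c')
    (hμ : μ = volume.withDensity fun p => ENNReal.ofReal (w' p))
    (hsupp : μ (Icc (0:ℝ) 1)ᶜ = 0)
    (ν : Measure ℝ) [IsProbabilityMeasure ν] (hint : Integrable (fun w : ℝ => w) ν) :
    |∫ p, qf ν p ∂μ| ≤ (c' + 1) * ∫ w, |w| ∂ν := by
  set I := ∫ w, |w| ∂ν with hIdef
  have hI : 0 ≤ I := I_nonneg
  have hc'0 : (0:ℝ) ≤ c' := le_trans (hw 0).1 (hw 0).2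
  have hle : μ ≤ (ENNReal.ofReal c') • (volume.restrict (Icc (0:ℝ) 1)) := by
    refine Measure.le_iff.mpr fun s hs => ?_
    have e1 : μ s = μ (s ∩ Icc 0 1) := (measure_inter_conull hsupp).symm
    have e2 : μ (s ∩ Icc 0 1) = ∫⁻ p in s ∩ Icc 0 1, ENNReal.ofReal (w' p) := by
      rw [hμ, withDensity_apply _ (hs.inter measurableSet_Icc)]
    have e3 : ∫⁻ p in s ∩ Icc (0:ℝ) 1, ENNReal.ofReal (w' p)
        ≤ ∫⁻ _ in s ∩ Icc (0:ℝ) 1, ENNReal.ofReal c' :=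
      lintegral_mono fun p => ENNReal.ofReal_le_ofReal (hw p).2
    rw [e1, e2]
    refine le_trans e3 ?_
    rw [setLIntegral_const, Measure.smul_apply, Measure.restrict_apply hs, smul_eq_mul]
  have hrIoo : volume.restrict (Ioo (0:ℝ) 1) = volume.restrict (Icc (0:ℝ) 1) :=
    Measure.restrict_congr_set Ioo_ae_eq_Icc
  have hmeasqf : AEMeasurable (qf ν) μ := by
    have h0 : AEMeasurable (qf ν) (volume.restrict (Ioo (0:ℝ) 1)) :=
      aemeasurable_restrict_of_monotoneOn measurableSet_Ioo (qf_monoOn hint)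
    rw [hrIoo] at h0
    exact (h0.smul_measure (ENNReal.ofReal c')).mono_measure hle
  have hlint : ∫⁻ p, ENNReal.ofReal |qf ν p| ∂μ ≤ ENNReal.ofReal c' * ENNReal.ofReal I := by
    calc ∫⁻ p, ENNReal.ofReal |qf ν p| ∂μ
        ≤ ∫⁻ p, ENNReal.ofReal |qf ν p|
            ∂((ENNReal.ofReal c') • (volume.restrict (Icc (0:ℝ) 1))) :=
          lintegral_mono' hle le_rfl
      _ = ENNReal.ofReal c' * ∫⁻ p in Icc (0:ℝ) 1, ENNReal.ofReal |qf ν p| := by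
          rw [lintegral_smul_measure, smul_eq_mul]
      _ = ENNReal.ofReal c' * ∫⁻ p in Ioo (0:ℝ) 1, ENNReal.ofReal |qf ν p| := by
          rw [hrIoo]
      _ = ENNReal.ofReal c' * ENNReal.ofReal I := by rw [lintegral_qf hint]
  have habs : |∫ p, qf ν p ∂μ| ≤ ∫ p, |qf ν p| ∂μ := by
    simpa [Real.norm_eq_abs] using norm_integral_le_integral_norm (μ := μ) (qf ν)
  refine le_trans habs ?_
  have hmabs : AEStronglyMeasurable (fun p => |qf ν p|) μ :=
    (measurable_abs.comp_aemeasurable hmeasqf).aestronglyMeasurable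
  have heq : ∫ p, |qf ν p| ∂μ = (∫⁻ p, ENNReal.ofReal |qf ν p| ∂μ).toReal := by
    rw [integral_eq_lintegral_of_nonneg_ae (ae_of_all _ fun p => abs_nonneg _) hmabs]
  rw [heq]
  calc (∫⁻ p, ENNReal.ofReal |qf ν p| ∂μ).toReal
      ≤ (ENNReal.ofReal c' * ENNReal.ofReal I).toReal := by
        refine ENNReal.toReal_mono ?_ hlint
        exact ENNReal.mul_ne_top ENNReal.ofReal_ne_top ENNReal.ofReal_ne_top
    _ = c' * I := by
        rw [← ENNReal.ofReal_mul hc'0, ENNReal.toReal_ofReal (mul_nonneg hc'0 hI)]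
    _ ≤ (c' + 1) * I := by nlinarith

lemma key {μ : Measure ℝ} (h : MemPP μ) :
    ∃ c : ℝ, 0 < c ∧ ∀ ν : Measure ℝ, IsProbabilityMeasure ν →
      Integrable (fun w : ℝ => w) ν → |∫ p, qf ν p ∂μ| ≤ c * ∫ w, |w| ∂ν := by
  obtain ⟨hprob, hsupp, hcase⟩ := h
  rcases hcase with ⟨c', w', hw, hμ⟩ | ⟨a, b, ha, hab, hb, hsupp'⟩
  · have hc'0 : (0:ℝ) ≤ c' := le_trans (hw 0).1 (hw 0).2
    exact ⟨c' + 1, by linarith, fun ν h1 h2 => by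
      haveI := h1; exact key2 hw hμ hsupp ν h2⟩
  · have hpos : (0:ℝ) < 1 / a + 1 / (1 - b) := by
      have h1 : (0:ℝ) < 1 / a := by positivity
      have h2 : (0:ℝ) < 1 / (1 - b) := one_div_pos.mpr (by linarith)
      linarith
    refine ⟨1 / a + 1 / (1 - b), hpos, fun ν h1 h2 => ?_⟩
    haveI := h1
    exact key1 hprob ha hab hb hsupp' ν h2

end QFAux

/-- Pointwise bound for the recursively defined valuation functions: if
`ψ(z) = λ ∫ F⁻¹_{W|Z=z}(p) μ¹(dp) + (1-λ) ∫ F⁻¹_{-W|Z=z}(p) μ²(dp)` with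
`λ ∈ [0,1]` and `μ¹, μ² ∈ P([0,1])'`, where the conditional law of `W` given
`Z = z` is the kernel `κ z`, then there is a constant `c ∈ (0,∞)` with
`|ψ(z)| ≤ c · E[|W| | Z = z]` for all relevant `z`. -/
theorem stmt_10 {E : Type*} [MeasurableSpace E] (κ : Kernel E ℝ)
    (lam : ℝ) (hlam0 : 0 ≤ lam) (hlam1 : lam ≤ 1)
    (μ1 μ2 : Measure ℝ) (h1 : MemPP μ1) (h2 : MemPP μ2) :
    ∃ c : ℝ, 0 < c ∧ ∀ z : E, IsProbabilityMeasure (κ z) →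
      Integrable (fun w : ℝ => w) (κ z) →
      |lam * ∫ p, qf (κ z) p ∂μ1
          + (1 - lam) * ∫ p, qf ((κ z).map fun w => -w) p ∂μ2|
        ≤ c * ∫ w, |w| ∂(κ z) := by
  obtain ⟨c1, hc1, hk1⟩ := QFAux.key h1
  obtain ⟨c2, hc2, hk2⟩ := QFAux.key h2
  refine ⟨c1 + c2, by linarith, fun z hz hint => ?_⟩
  haveI := hz
  set ν := κ z with hν
  set ν2 := ν.map (fun w => -w) with hν2
  have hν2prob : IsProbabilityMeasure ν2 :=
    Measure.isProbabilityMeasure_map measurable_neg.aemeasurable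
  have hν2int : Integrable (fun w : ℝ => w) ν2 := by
    rw [hν2]
    exact (integrable_map_measure aestronglyMeasurable_id
      measurable_neg.aemeasurable).mpr hint.neg
  have hIeq : ∫ w, |w| ∂ν2 = ∫ w, |w| ∂ν := by
    rw [hν2, integral_map measurable_neg.aemeasurable
      measurable_abs.aestronglyMeasurable]
    simp [abs_neg]
  set I := ∫ w, |w| ∂ν with hIdef
  have hI : 0 ≤ I := QFAux.I_nonneg
  have hA : |∫ p, qf ν p ∂μ1| ≤ c1 * I := hk1 ν hz hint
  have hB : |∫ p, qf ν2 p ∂μ2| ≤ c2 * I := by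
    have := hk2 ν2 hν2prob hν2int
    rwa [hIeq] at this
  set A := ∫ p, qf ν p ∂μ1
  set B := ∫ p, qf ν2 p ∂μ2
  calc |lam * A + (1 - lam) * B| ≤ |lam * A| + |(1 - lam) * B| := abs_add_le _ _
    _ = lam * |A| + (1 - lam) * |B| := by
        rw [abs_mul, abs_mul, abs_of_nonneg hlam0,
          abs_of_nonneg (show (0:ℝ) ≤ 1 - lam by linarith)]
    _ ≤ (c1 + c2) * I := by
        nlinarith [mul_le_mul_of_nonneg_left hA hlam0,
          mul_le_mul_of_nonneg_left hB (by linarith : (0:ℝ) ≤ 1 - lam),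
          mul_nonneg (mul_nonneg (by linarith : (0:ℝ) ≤ 1 - lam) hc1.le) hI,
          mul_nonneg (mul_nonneg hlam0 hc2.le) hI]
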